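/- Let φ₀ be the density of N(μ₀, Σ₀) on ℝ^d (Σ₀ positive definite), Q orthogonal, v ∈ ℝ^d, and φ₁(x) = φ₀(Qx + v). Define SNR(φ₀→φ₁) = (E_{φ₀}[ℓ(X)] − E_{φ₁}[ℓ(X)])² / (Var_{φ₀}[ℓ(X)] + Var_{φ₁}[ℓ(X)]) where ℓ = log φ₀. Then SNR(φ₀→φ₁) ≤ 2·sKL(φ₀, φ₁)² / d. -/

import Mathlib

open MeasureTheory ProbabilityTheory Matrix Real

/-- Density of the multivariate Gaussian `N(μ, S)` on `ℝ^d`. -/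
noncomputable def gaussianDensity {d : ℕ} (μ : Fin d → ℝ) (S : Matrix (Fin d) (Fin d) ℝ)
    (x : Fin d → ℝ) : ℝ :=
  ((2 * Real.pi) ^ d * S.det) ^ (-(1 : ℝ) / 2) *
    Real.exp (-(1 / 2) * ((x - μ) ⬝ᵥ S⁻¹ *ᵥ (x - μ)))


section aff
variable {d : ℕ}

lemma measEmb_lin (M : Matrix (Fin d) (Fin d) ℝ) (hM : M.det ≠ 0) :
    MeasurableEmbedding (Matrix.toLin' M : (Fin d → ℝ) → (Fin d → ℝ)) := by
  have hinv : Invertible M := M.invertibleOfIsUnitDet (isUnit_iff_ne_zero.mpr hM)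
  exact (Matrix.toLinearEquiv' M hinv).toContinuousLinearEquiv.toHomeomorph.measurableEmbedding

lemma measEmb_affine (M : Matrix (Fin d) (Fin d) ℝ) (hM : M.det ≠ 0) (w : Fin d → ℝ) :
    MeasurableEmbedding (fun x : Fin d → ℝ => M *ᵥ x + w) := by
  have h2 : MeasurableEmbedding (fun y : Fin d → ℝ => y + w) :=
    (MeasurableEquiv.addRight w).measurableEmbedding
  have h3 := h2.comp (measEmb_lin M hM)
  have : (fun x : Fin d → ℝ => M *ᵥ x + w) =
      (fun y : Fin d → ℝ => y + w) ∘ (Matrix.toLin' M : (Fin d → ℝ) → (Fin d → ℝ)) := by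
    funext x; simp [Function.comp, Matrix.toLin'_apply]
  rw [this]; exact h3

lemma map_affine (M : Matrix (Fin d) (Fin d) ℝ) (hM : M.det ≠ 0) (w : Fin d → ℝ) :
    Measure.map (fun x : Fin d → ℝ => M *ᵥ x + w) volume
      = ENNReal.ofReal |M.det⁻¹| • volume := by
  have : (fun x : Fin d → ℝ => M *ᵥ x + w) =
      (fun y : Fin d → ℝ => y + w) ∘ (Matrix.toLin' M : (Fin d → ℝ) → (Fin d → ℝ)) := by
    funext x; simp [Function.comp, Matrix.toLin'_apply]
  rw [this, ← Measure.map_map (measurable_add_const w) (measEmb_lin M hM).measurable,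
    Real.map_matrix_volume_pi_eq_smul_volume_pi hM, Measure.map_smul,
    map_add_right_eq_self]

lemma integral_affine (M : Matrix (Fin d) (Fin d) ℝ) (hM : M.det ≠ 0) (w : Fin d → ℝ)
    (f : (Fin d → ℝ) → ℝ) :
    ∫ x, f (M *ᵥ x + w) = |M.det|⁻¹ * ∫ y, f y := by
  have h2 := (measEmb_affine M hM w).integral_map (μ := volume) f
  rw [map_affine M hM w, integral_smul_measure,
    ENNReal.toReal_ofReal (abs_nonneg _), abs_inv] at h2
  rw [← h2]; simp [smul_eq_mul]

lemma integrable_affine_iff (M : Matrix (Fin d) (Fin d) ℝ) (hM : M.det ≠ 0) (w : Fin d → ℝ)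
    (f : (Fin d → ℝ) → ℝ) :
    Integrable (fun x => f (M *ᵥ x + w)) volume ↔ Integrable f volume := by
  have h2 := (measEmb_affine M hM w).integrable_map_iff (μ := volume) (g := f)
  rw [map_affine M hM w, integrable_smul_measure (by simp [hM]) (by simp)] at h2
  rw [show (fun x => f (M *ᵥ x + w)) = f ∘ (fun x => M *ᵥ x + w) from rfl, ← h2]
end aff

lemma rpow_two' (x : ℝ) : x ^ (2:ℝ) = x ^ 2 := by
  rw [show (2:ℝ) = ((2:ℕ):ℝ) by norm_num, Real.rpow_natCast]

lemma m0_val : ∫ x : ℝ, exp (-(1/2) * x ^ 2) = Real.sqrt (2*π) := by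
  rw [integral_gaussian]
  rw [show π / (1/2) = 2 * π by ring]

lemma m0_int : Integrable (fun x : ℝ => exp (-(1/2) * x ^ 2)) := by
  exact integrable_exp_neg_mul_sq (by norm_num)

lemma m2_int : Integrable (fun x : ℝ => x ^ 2 * exp (-(1/2) * x ^ 2)) := by
  have := integrable_rpow_mul_exp_neg_mul_sq (b := 1/2) (by norm_num) (s := 2) (by norm_num)
  simpa [rpow_two'] using this

lemma m4_int : Integrable (fun x : ℝ => x ^ 4 * exp (-(1/2) * x ^ 2)) := by
  have := integrable_rpow_mul_exp_neg_mul_sq (b := 1/2) (by norm_num) (s := 4) (by norm_num)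
  have h4 : ∀ x : ℝ, x ^ (4:ℝ) = x ^ 4 := by
    intro x; rw [show (4:ℝ) = ((4:ℕ):ℝ) by norm_num, Real.rpow_natCast]
  simpa [h4] using this

lemma gamma_32 : Real.Gamma (3/2) = Real.sqrt π / 2 := by
  rw [show (3/2 : ℝ) = 1/2 + 1 by norm_num, Real.Gamma_add_one (by norm_num),
    Real.Gamma_one_half_eq]
  ring

lemma gamma_52 : Real.Gamma (5/2) = 3 * Real.sqrt π / 4 := by
  rw [show (5/2 : ℝ) = 3/2 + 1 by norm_num, Real.Gamma_add_one (by norm_num), gamma_32]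
  ring

lemma half_rpow (r : ℝ) : ((1/2 : ℝ)) ^ (-r) = (2:ℝ) ^ r := by
  rw [show (1/2:ℝ) = (2:ℝ)⁻¹ by norm_num, ← Real.rpow_neg_one,
    ← Real.rpow_mul (by norm_num)]
  norm_num
  
lemma m2_val : ∫ x : ℝ, x ^ 2 * exp (-(1/2) * x ^ 2) = Real.sqrt (2*π) := by
  have key := integral_rpow_mul_exp_neg_mul_rpow (p := 2) (q := 2) (b := 1/2)
    (by norm_num) (by norm_num) (by norm_num)
  simp only [rpow_two'] at key
  have heven : ∫ x : ℝ, x ^ 2 * exp (-(1/2) * x ^ 2)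
      = 2 * ∫ x in Set.Ioi (0:ℝ), x ^ 2 * exp (-(1/2) * x ^ 2) := by
    rw [← integral_comp_abs (f := fun t => t ^ 2 * exp (-(1/2) * t ^ 2))]
    congr 1; funext x; rw [sq_abs]
  rw [heven, key, show (2+1)/2 = (3/2:ℝ) by norm_num, gamma_32,
    show -(2+1)/2 = -(3/2:ℝ) by norm_num, half_rpow,
    show (3/2:ℝ) = 1 + 1/2 by norm_num, Real.rpow_add (by norm_num), Real.rpow_one,
    show ((2:ℝ) ^ (1/2:ℝ)) = Real.sqrt 2 from (Real.sqrt_eq_rpow 2).symm,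
    Real.sqrt_mul (by norm_num)]
  ring

lemma m4_val : ∫ x : ℝ, x ^ 4 * exp (-(1/2) * x ^ 2) = 3 * Real.sqrt (2*π) := by
  have key := integral_rpow_mul_exp_neg_mul_rpow (p := 2) (q := 4) (b := 1/2)
    (by norm_num) (by norm_num) (by norm_num)
  have h4 : ∀ x : ℝ, x ^ (4:ℝ) = x ^ 4 := by
    intro x; rw [show (4:ℝ) = ((4:ℕ):ℝ) by norm_num, Real.rpow_natCast]
  simp only [rpow_two', h4] at key
  have heven : ∫ x : ℝ, x ^ 4 * exp (-(1/2) * x ^ 2)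
      = 2 * ∫ x in Set.Ioi (0:ℝ), x ^ 4 * exp (-(1/2) * x ^ 2) := by
    rw [← integral_comp_abs (f := fun t => t ^ 4 * exp (-(1/2) * t ^ 2))]
    congr 1; funext x
    rw [show |x| ^ 4 = (|x|^2)^2 by ring, sq_abs]
    ring
  rw [heven, key, show (4+1)/2 = (5/2:ℝ) by norm_num, gamma_52,
    show -(4+1)/2 = -(5/2:ℝ) by norm_num, half_rpow,
    show (5/2:ℝ) = 2 + 1/2 by norm_num, Real.rpow_add (by norm_num),
    show ((2:ℝ) ^ (1/2:ℝ)) = Real.sqrt 2 from (Real.sqrt_eq_rpow 2).symm,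
    show ((2:ℝ) ^ (2:ℝ)) = 4 by rw [rpow_two']; norm_num,
    Real.sqrt_mul (by norm_num)]
  ring

section pi
variable {d : ℕ}

lemma gauss_prod (y : Fin d → ℝ) :
    exp (-(1/2) * (y ⬝ᵥ y)) = ∏ i, exp (-(1/2) * (y i)^2) := by
  rw [← Real.exp_sum]
  congr 1
  simp only [dotProduct, Finset.mul_sum]
  exact Finset.sum_congr rfl fun i _ => by ring

lemma gI0_int : Integrable (fun y : Fin d → ℝ => exp (-(1/2) * (y ⬝ᵥ y))) := by
  have h := Integrable.fintype_prod_dep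
    (f := fun (_ : Fin d) (x : ℝ) => exp (-(1/2) * x^2)) (fun _ => m0_int)
  exact h.congr (Filter.Eventually.of_forall fun y => (gauss_prod y).symm)

lemma gI0_val : ∫ y : Fin d → ℝ, exp (-(1/2) * (y ⬝ᵥ y)) = Real.sqrt (2*π) ^ d := by
  simp_rw [gauss_prod]
  rw [integral_fintype_prod_volume_eq_prod (f := fun (_ : Fin d) (x : ℝ) => exp (-(1/2) * x^2))]
  simp only [m0_val, Finset.prod_const, Finset.card_univ, Fintype.card_fin]

/-- auxiliary product functions -/
noncomputable def F1 (i k : Fin d) (x : ℝ) : ℝ :=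
  (if k = i then x^2 else 1) * exp (-(1/2) * x^2)

lemma F1_prod (i : Fin d) (y : Fin d → ℝ) :
    ∏ k, F1 i k (y k) = (y i)^2 * exp (-(1/2) * (y ⬝ᵥ y)) := by
  unfold F1
  rw [Finset.prod_mul_distrib, Finset.prod_ite_eq' Finset.univ i (fun k => (y k)^2),
    gauss_prod]
  simp

lemma F1_int (i k : Fin d) : Integrable (F1 i k) := by
  unfold F1
  by_cases h : k = i
  · simp only [if_pos h]; exact m2_int
  · simp only [if_neg h, one_mul]; exact m0_int

lemma F1_val (i k : Fin d) : ∫ x : ℝ, F1 i k x = Real.sqrt (2*π) := by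
  unfold F1
  by_cases h : k = i
  · simp only [if_pos h]; exact m2_val
  · simp only [if_neg h, one_mul]; exact m0_val

lemma gI1_pt (y : Fin d → ℝ) :
    (y ⬝ᵥ y) * exp (-(1/2) * (y ⬝ᵥ y)) = ∑ i, ∏ k, F1 i k (y k) := by
  simp_rw [F1_prod]
  rw [dotProduct, Finset.sum_mul]
  exact Finset.sum_congr rfl fun i _ => by ring

lemma gI1_int : Integrable (fun y : Fin d → ℝ => (y ⬝ᵥ y) * exp (-(1/2) * (y ⬝ᵥ y))) := by
  have h : Integrable (fun y : Fin d → ℝ => ∑ i, ∏ k, F1 i k (y k)) :=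
    integrable_finset_sum _ fun i _ => Integrable.fintype_prod_dep (fun k => F1_int i k)
  exact h.congr (Filter.Eventually.of_forall fun y => (gI1_pt y).symm)

lemma gI1_val : ∫ y : Fin d → ℝ, (y ⬝ᵥ y) * exp (-(1/2) * (y ⬝ᵥ y))
    = d * Real.sqrt (2*π) ^ d := by
  simp_rw [gI1_pt]
  rw [integral_finset_sum (μ := volume) _ fun i _ => Integrable.fintype_prod_dep (fun k => F1_int i k)]
  have : ∀ i : Fin d, ∫ y : Fin d → ℝ, ∏ k, F1 i k (y k) = Real.sqrt (2*π) ^ d := by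
    intro i
    rw [integral_fintype_prod_volume_eq_prod (f := F1 i)]
    simp [F1_val]
  simp [this, Finset.sum_const]

noncomputable def F2 (i j k : Fin d) (x : ℝ) : ℝ :=
  (if k = i then x^2 else 1) * ((if k = j then x^2 else 1) * exp (-(1/2) * x^2))

lemma F2_prod (i j : Fin d) (y : Fin d → ℝ) :
    ∏ k, F2 i j k (y k) = (y i)^2 * ((y j)^2 * exp (-(1/2) * (y ⬝ᵥ y))) := by
  unfold F2
  rw [Finset.prod_mul_distrib, Finset.prod_mul_distrib,
    Finset.prod_ite_eq' Finset.univ i (fun k => (y k)^2),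
    Finset.prod_ite_eq' Finset.univ j (fun k => (y k)^2), gauss_prod]
  simp

lemma sq_sq_exp : (fun x : ℝ => x^2*(x^2*exp (-(1/2)*x^2))) = fun x => x^4*exp (-(1/2)*x^2) :=
  funext fun x => by ring

lemma F2_int (i j k : Fin d) : Integrable (F2 i j k) := by
  unfold F2
  by_cases h : k = i <;> by_cases h' : k = j
  · simp only [if_pos h, if_pos h', sq_sq_exp]; exact m4_int
  · simp only [if_pos h, if_neg h', one_mul]; exact m2_int
  · simp only [if_neg h, if_pos h', one_mul]; exact m2_int
  · simp only [if_neg h, if_neg h', one_mul]; exact m0_int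

lemma F2_val (i j k : Fin d) :
    ∫ x : ℝ, F2 i j k x = (if k = i ∧ k = j then 3 else 1) * Real.sqrt (2*π) := by
  unfold F2
  by_cases h : k = i <;> by_cases h' : k = j
  · rw [if_pos ⟨h, h'⟩]
    simp only [if_pos h, if_pos h', sq_sq_exp]
    rw [m4_val]
  · rw [if_neg (by rintro ⟨_, hh⟩; exact h' hh)]
    simp only [if_pos h, if_neg h', one_mul]
    rw [m2_val]
  · rw [if_neg (by rintro ⟨hh, _⟩; exact h hh)]
    simp only [if_neg h, if_pos h', one_mul]
    rw [m2_val]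
  · rw [if_neg (by rintro ⟨hh, _⟩; exact h hh)]
    simp only [if_neg h, if_neg h', one_mul]
    rw [m0_val]

lemma gI2_pt (y : Fin d → ℝ) :
    (y ⬝ᵥ y)^2 * exp (-(1/2) * (y ⬝ᵥ y)) = ∑ i, ∑ j, ∏ k, F2 i j k (y k) := by
  simp_rw [F2_prod]
  rw [dotProduct, sq, Finset.sum_mul_sum]
  rw [Finset.sum_mul]
  refine Finset.sum_congr rfl fun i _ => ?_
  rw [Finset.sum_mul]
  exact Finset.sum_congr rfl fun j _ => by ring

lemma gI2_int : Integrable (fun y : Fin d → ℝ => (y ⬝ᵥ y)^2 * exp (-(1/2) * (y ⬝ᵥ y))) := by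
  have h : Integrable (fun y : Fin d → ℝ => ∑ i, ∑ j, ∏ k, F2 i j k (y k)) :=
    integrable_finset_sum _ fun i _ => integrable_finset_sum _ fun j _ =>
      Integrable.fintype_prod_dep (fun k => F2_int i j k)
  exact h.congr (Filter.Eventually.of_forall fun y => (gI2_pt y).symm)

lemma prod_if_diag (i j : Fin d) :
    (∏ k : Fin d, (if k = i ∧ k = j then (3:ℝ) else 1)) = if i = j then 3 else 1 := by
  by_cases h : i = j
  · subst h
    simp only [and_self]
    rw [Finset.prod_ite_eq' Finset.univ i (fun _ => (3:ℝ))]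
    simp
  · have : ∀ k : Fin d, (if k = i ∧ k = j then (3:ℝ) else 1) = 1 := by
      intro k
      rw [if_neg]
      rintro ⟨rfl, rfl⟩; exact h rfl
    simp [this, h]

lemma gI2_val : ∫ y : Fin d → ℝ, (y ⬝ᵥ y)^2 * exp (-(1/2) * (y ⬝ᵥ y))
    = (d^2 + 2*d) * Real.sqrt (2*π) ^ d := by
  simp_rw [gI2_pt]
  rw [integral_finset_sum (μ := volume) _ fun i _ => integrable_finset_sum _ fun j _ =>
      Integrable.fintype_prod_dep (fun k => F2_int i j k)]
  have h1 : ∀ i : Fin d, ∫ y : Fin d → ℝ, ∑ j, ∏ k, F2 i j k (y k)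
      = ∑ j, (if i = j then (3:ℝ) else 1) * Real.sqrt (2*π) ^ d := by
    intro i
    rw [integral_finset_sum (μ := volume) _ fun j _ => Integrable.fintype_prod_dep (fun k => F2_int i j k)]
    refine Finset.sum_congr rfl fun j _ => ?_
    rw [integral_fintype_prod_volume_eq_prod (f := F2 i j)]
    simp_rw [F2_val]
    rw [Finset.prod_mul_distrib, prod_if_diag]
    simp only [Finset.prod_const, Finset.card_univ, Fintype.card_fin]
  simp_rw [h1]
  have h2 : ∀ i : Fin d, ∑ j, (if i = j then (3:ℝ) else 1) * Real.sqrt (2*π) ^ d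
      = (2 + d) * Real.sqrt (2*π) ^ d := by
    intro i
    have key : ∀ j : Fin d, (if i = j then (3:ℝ) else 1) * Real.sqrt (2*π) ^ d
        = Real.sqrt (2*π) ^ d + (if i = j then 2 * Real.sqrt (2*π) ^ d else 0) := by
      intro j; by_cases h : i = j
      · rw [if_pos h, if_pos h]; ring
      · rw [if_neg h, if_neg h]; ring
    simp_rw [key]
    rw [Finset.sum_add_distrib,
      Finset.sum_ite_eq Finset.univ i (fun _ => (2:ℝ) * Real.sqrt (2*π)^d)]
    simp only [Finset.sum_const, Finset.card_univ, Fintype.card_fin, Finset.mem_univ, if_pos,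
      nsmul_eq_mul]
    ring
  simp_rw [h2]
  simp only [Finset.sum_const, Finset.card_univ, Fintype.card_fin, nsmul_eq_mul]
  ring
end pi

section bridge
variable {d : ℕ}

open scoped MatrixOrder in
lemma exists_sqrt {S : Matrix (Fin d) (Fin d) ℝ} (hS : S.PosDef) :
    ∃ B : Matrix (Fin d) (Fin d) ℝ, B * B = S⁻¹ ∧ Bᵀ = B ∧ 0 < B.det := by
  have hT : (S⁻¹).PosDef := hS.inv
  have hsq : (CFC.sqrt (S⁻¹)).PosSemidef := (CFC.sqrt_nonneg (S⁻¹)).posSemidef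
  have hherm := Matrix.PosSemidef.isHermitian hsq
  have hmm : CFC.sqrt (S⁻¹) * CFC.sqrt (S⁻¹) = S⁻¹ :=
    CFC.sqrt_mul_sqrt_self (S⁻¹) (Matrix.PosSemidef.nonneg hT.posSemidef)
  refine ⟨CFC.sqrt (S⁻¹), hmm, ?_, ?_⟩
  · have h := hherm
    rw [Matrix.IsHermitian] at h
    simpa [Matrix.conjTranspose_eq_transpose_of_trivial] using h
  · have h1 : (0:ℝ) ≤ (CFC.sqrt (S⁻¹)).det := by
      rw [hherm.det_eq_prod_eigenvalues]
      exact Finset.prod_nonneg fun i _ =>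
        Matrix.PosSemidef.eigenvalues_nonneg hsq i
    have h2 : (CFC.sqrt (S⁻¹)).det * (CFC.sqrt (S⁻¹)).det = (S⁻¹).det := by
      rw [← Matrix.det_mul, hmm]
    have h3 : (0:ℝ) < (S⁻¹).det := hT.det_pos
    rcases lt_or_eq_of_le h1 with h | h
    · exact h
    · exfalso; rw [← h2, ← h, mul_zero] at h3; exact lt_irrefl _ h3

lemma quad_cov {S B : Matrix (Fin d) (Fin d) ℝ} (hBB : B * B = S⁻¹) (hBt : Bᵀ = B)
    (hBd : 0 < B.det) (μ₀ y : Fin d → ℝ) :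
    ((B⁻¹ *ᵥ y + μ₀) - μ₀) ⬝ᵥ S⁻¹ *ᵥ ((B⁻¹ *ᵥ y + μ₀) - μ₀) = y ⬝ᵥ y := by
  have hBinv : B * B⁻¹ = 1 := Matrix.mul_nonsing_inv B (isUnit_iff_ne_zero.mpr (ne_of_gt hBd))
  have hsimp : (B⁻¹ *ᵥ y + μ₀) - μ₀ = B⁻¹ *ᵥ y := add_sub_cancel_right _ _
  have key : S⁻¹ *ᵥ (B⁻¹ *ᵥ y) = B *ᵥ y := by
    rw [← hBB, Matrix.mulVec_mulVec, Matrix.mul_assoc, hBinv, Matrix.mul_one]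
  rw [hsimp, key, Matrix.dotProduct_mulVec,
    show (B⁻¹ *ᵥ y) ᵥ* B = (B⁻¹ *ᵥ y) ᵥ* Bᵀ by rw [hBt],
    Matrix.vecMul_transpose, Matrix.mulVec_mulVec, hBinv, Matrix.one_mulVec]
end bridge

section master
variable {d : ℕ} {S B : Matrix (Fin d) (Fin d) ℝ}

/-- master change of variables: integrals of functions of the quadratic form. -/
lemma master_cov (μ₀ : Fin d → ℝ) (hBB : B * B = S⁻¹) (hBt : Bᵀ = B) (hBd : 0 < B.det)
    (g : ℝ → ℝ) :
    ∫ x : Fin d → ℝ, g ((x - μ₀) ⬝ᵥ S⁻¹ *ᵥ (x - μ₀))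
      = B.det⁻¹ * ∫ y : Fin d → ℝ, g (y ⬝ᵥ y) := by
  have hdet : B⁻¹.det ≠ 0 := by
    rw [Matrix.det_nonsing_inv, Ring.inverse_eq_inv']
    exact inv_ne_zero (ne_of_gt hBd)
  have h := integral_affine B⁻¹ hdet μ₀ (fun x => g ((x - μ₀) ⬝ᵥ S⁻¹ *ᵥ (x - μ₀)))
  simp only [quad_cov hBB hBt hBd μ₀] at h
  rw [h, Matrix.det_nonsing_inv, Ring.inverse_eq_inv', abs_inv, inv_inv,
    abs_of_pos hBd, ← mul_assoc, inv_mul_cancel₀ (ne_of_gt hBd), one_mul]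

lemma master_int_iff (μ₀ : Fin d → ℝ) (hBB : B * B = S⁻¹) (hBt : Bᵀ = B) (hBd : 0 < B.det)
    (g : ℝ → ℝ) :
    Integrable (fun x : Fin d → ℝ => g ((x - μ₀) ⬝ᵥ S⁻¹ *ᵥ (x - μ₀))) volume
      ↔ Integrable (fun y : Fin d → ℝ => g (y ⬝ᵥ y)) volume := by
  have hdet : B⁻¹.det ≠ 0 := by
    rw [Matrix.det_nonsing_inv, Ring.inverse_eq_inv']
    exact inv_ne_zero (ne_of_gt hBd)
  have h := integrable_affine_iff B⁻¹ hdet μ₀ (fun x => g ((x - μ₀) ⬝ᵥ S⁻¹ *ᵥ (x - μ₀)))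
  simp only [quad_cov hBB hBt hBd μ₀] at h
  exact h.symm
end master

section gauss
variable {d : ℕ}

lemma sqrt2pi_pos : 0 < Real.sqrt (2*π) :=
  Real.sqrt_pos.mpr (by positivity)

lemma gc_pos {S : Matrix (Fin d) (Fin d) ℝ} (hS : S.PosDef) :
    0 < ((2 * π) ^ d * S.det) ^ (-(1 : ℝ) / 2) :=
  Real.rpow_pos_of_pos (mul_pos (by positivity) hS.det_pos) _

lemma φ_pos {S : Matrix (Fin d) (Fin d) ℝ} (μ₀ : Fin d → ℝ) (hS : S.PosDef)
    (x : Fin d → ℝ) : 0 < gaussianDensity μ₀ S x :=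
  mul_pos (gc_pos hS) (Real.exp_pos _)

lemma detB_sq {S B : Matrix (Fin d) (Fin d) ℝ} (hS : S.PosDef) (hBB : B * B = S⁻¹) :
    B.det * B.det = S.det⁻¹ := by
  rw [← Matrix.det_mul, hBB, Matrix.det_nonsing_inv, Ring.inverse_eq_inv']

lemma const_id {S B : Matrix (Fin d) (Fin d) ℝ} (hS : S.PosDef) (hBB : B * B = S⁻¹)
    (hBd : 0 < B.det) :
    ((2 * π) ^ d * S.det) ^ (-(1 : ℝ) / 2) * B.det⁻¹ * Real.sqrt (2*π) ^ d = 1 := by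
  set Z := Real.sqrt (2*π) ^ d with hZdef
  have hZ : 0 < Z := pow_pos sqrt2pi_pos d
  have hW : 0 < Z * B.det⁻¹ := mul_pos hZ (inv_pos.mpr hBd)
  have hdet : 0 < S.det := hS.det_pos
  have hbase : (2 * π) ^ d * S.det = (Z * B.det⁻¹) ^ 2 := by
    have h1 : Z ^ 2 = (2 * π) ^ d := by
      rw [hZdef, ← pow_mul, mul_comm d 2, pow_mul, Real.sq_sqrt (by positivity)]
    have h2 : (B.det⁻¹) ^ 2 = S.det := by
      rw [sq, ← mul_inv, detB_sq hS hBB, inv_inv]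
    rw [mul_pow Z (B.det⁻¹) 2, h1, h2]
  rw [hbase, show ((Z * B.det⁻¹) ^ 2 : ℝ) = (Z * B.det⁻¹) ^ ((2:ℕ):ℝ) from
    (Real.rpow_natCast _ 2).symm, ← Real.rpow_mul (le_of_lt hW),
    show ((2:ℕ):ℝ) * (-(1:ℝ)/2) = -1 by norm_num, Real.rpow_neg_one, mul_inv]
  field_simp

lemma φ_int {S B : Matrix (Fin d) (Fin d) ℝ} (μ₀ : Fin d → ℝ) (hS : S.PosDef)
    (hBB : B * B = S⁻¹) (hBt : Bᵀ = B) (hBd : 0 < B.det) :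
    Integrable (gaussianDensity μ₀ S) volume := by
  have h := (master_int_iff μ₀ hBB hBt hBd
    (fun t => ((2 * π) ^ d * S.det) ^ (-(1 : ℝ) / 2) * Real.exp (-(1/2) * t))).mpr
    (gI0_int.const_mul _)
  exact h.congr (Filter.Eventually.of_forall fun x => rfl)

lemma φ_val {S B : Matrix (Fin d) (Fin d) ℝ} (μ₀ : Fin d → ℝ) (hS : S.PosDef)
    (hBB : B * B = S⁻¹) (hBt : Bᵀ = B) (hBd : 0 < B.det) :
    ∫ x, gaussianDensity μ₀ S x = 1 := by
  have h := master_cov μ₀ hBB hBt hBd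
    (fun t => ((2 * π) ^ d * S.det) ^ (-(1 : ℝ) / 2) * Real.exp (-(1/2) * t))
  rw [show (fun x => gaussianDensity μ₀ S x) = fun x =>
      ((2 * π) ^ d * S.det) ^ (-(1 : ℝ) / 2) *
        Real.exp (-(1/2) * ((x - μ₀) ⬝ᵥ S⁻¹ *ᵥ (x - μ₀))) from rfl, h,
    integral_const_mul, gI0_val]
  have := const_id hS hBB hBd
  nlinarith [this]

lemma qφ_int {S B : Matrix (Fin d) (Fin d) ℝ} (μ₀ : Fin d → ℝ) (hS : S.PosDef)
    (hBB : B * B = S⁻¹) (hBt : Bᵀ = B) (hBd : 0 < B.det) :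
    Integrable (fun x => ((x - μ₀) ⬝ᵥ S⁻¹ *ᵥ (x - μ₀)) * gaussianDensity μ₀ S x) volume := by
  have h := (master_int_iff μ₀ hBB hBt hBd
    (fun t => t * (((2 * π) ^ d * S.det) ^ (-(1 : ℝ) / 2) * Real.exp (-(1/2) * t)))).mpr ?_
  · exact h.congr (Filter.Eventually.of_forall fun x => rfl)
  · have : Integrable (fun y : Fin d → ℝ =>
        ((2 * π) ^ d * S.det) ^ (-(1 : ℝ) / 2) * ((y ⬝ᵥ y) * Real.exp (-(1/2) * (y ⬝ᵥ y)))) :=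
      gI1_int.const_mul _
    exact this.congr (Filter.Eventually.of_forall fun y => by ring)

lemma qφ_val {S B : Matrix (Fin d) (Fin d) ℝ} (μ₀ : Fin d → ℝ) (hS : S.PosDef)
    (hBB : B * B = S⁻¹) (hBt : Bᵀ = B) (hBd : 0 < B.det) :
    ∫ x, ((x - μ₀) ⬝ᵥ S⁻¹ *ᵥ (x - μ₀)) * gaussianDensity μ₀ S x = d := by
  have h := master_cov μ₀ hBB hBt hBd
    (fun t => t * (((2 * π) ^ d * S.det) ^ (-(1 : ℝ) / 2) * Real.exp (-(1/2) * t)))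
  rw [show (fun x => ((x - μ₀) ⬝ᵥ S⁻¹ *ᵥ (x - μ₀)) * gaussianDensity μ₀ S x) = fun x =>
      ((x - μ₀) ⬝ᵥ S⁻¹ *ᵥ (x - μ₀)) * (((2 * π) ^ d * S.det) ^ (-(1 : ℝ) / 2) *
        Real.exp (-(1/2) * ((x - μ₀) ⬝ᵥ S⁻¹ *ᵥ (x - μ₀)))) from rfl, h]
  have h2 : ∫ y : Fin d → ℝ, (y ⬝ᵥ y) * (((2 * π) ^ d * S.det) ^ (-(1 : ℝ) / 2) *
      Real.exp (-(1/2) * (y ⬝ᵥ y)))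
      = ((2 * π) ^ d * S.det) ^ (-(1 : ℝ) / 2) * (d * Real.sqrt (2*π) ^ d) := by
    rw [← gI1_val, ← integral_const_mul]
    congr 1; funext y; ring
  rw [h2]
  have := const_id hS hBB hBd
  nlinarith [this]

lemma q2φ_int {S B : Matrix (Fin d) (Fin d) ℝ} (μ₀ : Fin d → ℝ) (hS : S.PosDef)
    (hBB : B * B = S⁻¹) (hBt : Bᵀ = B) (hBd : 0 < B.det) :
    Integrable (fun x => ((x - μ₀) ⬝ᵥ S⁻¹ *ᵥ (x - μ₀))^2 * gaussianDensity μ₀ S x) volume := by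
  have h := (master_int_iff μ₀ hBB hBt hBd
    (fun t => t^2 * (((2 * π) ^ d * S.det) ^ (-(1 : ℝ) / 2) * Real.exp (-(1/2) * t)))).mpr ?_
  · exact h.congr (Filter.Eventually.of_forall fun x => rfl)
  · have : Integrable (fun y : Fin d → ℝ =>
        ((2 * π) ^ d * S.det) ^ (-(1 : ℝ) / 2) * ((y ⬝ᵥ y)^2 * Real.exp (-(1/2) * (y ⬝ᵥ y)))) :=
      gI2_int.const_mul _
    exact this.congr (Filter.Eventually.of_forall fun y => by ring)

lemma q2φ_val {S B : Matrix (Fin d) (Fin d) ℝ} (μ₀ : Fin d → ℝ) (hS : S.PosDef)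
    (hBB : B * B = S⁻¹) (hBt : Bᵀ = B) (hBd : 0 < B.det) :
    ∫ x, ((x - μ₀) ⬝ᵥ S⁻¹ *ᵥ (x - μ₀))^2 * gaussianDensity μ₀ S x = d^2 + 2*d := by
  have h := master_cov μ₀ hBB hBt hBd
    (fun t => t^2 * (((2 * π) ^ d * S.det) ^ (-(1 : ℝ) / 2) * Real.exp (-(1/2) * t)))
  rw [show (fun x => ((x - μ₀) ⬝ᵥ S⁻¹ *ᵥ (x - μ₀))^2 * gaussianDensity μ₀ S x) = fun x =>
      ((x - μ₀) ⬝ᵥ S⁻¹ *ᵥ (x - μ₀))^2 * (((2 * π) ^ d * S.det) ^ (-(1 : ℝ) / 2) *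
        Real.exp (-(1/2) * ((x - μ₀) ⬝ᵥ S⁻¹ *ᵥ (x - μ₀)))) from rfl, h]
  have h2 : ∫ y : Fin d → ℝ, (y ⬝ᵥ y)^2 * (((2 * π) ^ d * S.det) ^ (-(1 : ℝ) / 2) *
      Real.exp (-(1/2) * (y ⬝ᵥ y)))
      = ((2 * π) ^ d * S.det) ^ (-(1 : ℝ) / 2) * ((d^2 + 2*d) * Real.sqrt (2*π) ^ d) := by
    rw [← gI2_val, ← integral_const_mul]
    congr 1; funext y; ring
  rw [h2]
  have := const_id hS hBB hBd
  nlinarith [this]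
end gauss

open scoped ENNReal NNReal

section var
variable {d : ℕ}

lemma quad_meas (μ₀ : Fin d → ℝ) (S : Matrix (Fin d) (Fin d) ℝ) :
    Measurable (fun x : Fin d → ℝ => (x - μ₀) ⬝ᵥ S⁻¹ *ᵥ (x - μ₀)) := by
  simp only [dotProduct, Matrix.mulVec, dotProduct, Pi.sub_apply]
  apply Finset.measurable_sum
  intro i _
  apply Measurable.mul
  · exact (measurable_pi_apply i).sub measurable_const
  · apply Finset.measurable_sum
    intro j _
    exact ((measurable_pi_apply j).sub measurable_const).const_mul _

lemma φ_meas (μ₀ : Fin d → ℝ) (S : Matrix (Fin d) (Fin d) ℝ) :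
    Measurable (gaussianDensity μ₀ S) := by
  unfold gaussianDensity
  exact (Real.measurable_exp.comp ((quad_meas μ₀ S).const_mul _)).const_mul _

lemma φ_nonneg (μ₀ : Fin d → ℝ) {S : Matrix (Fin d) (Fin d) ℝ} (hS : S.PosDef)
    (x : Fin d → ℝ) : 0 ≤ gaussianDensity μ₀ S x := le_of_lt (φ_pos μ₀ hS x)

lemma integral_wd (μ₀ : Fin d → ℝ) {S : Matrix (Fin d) (Fin d) ℝ} (hS : S.PosDef)
    (h : (Fin d → ℝ) → ℝ) :
    ∫ a, h a ∂(volume.withDensity fun x => ENNReal.ofReal (gaussianDensity μ₀ S x))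
      = ∫ a, gaussianDensity μ₀ S a * h a := by
  have heq : (fun x => ENNReal.ofReal (gaussianDensity μ₀ S x))
      = fun x => ((Real.toNNReal (gaussianDensity μ₀ S x)) : ℝ≥0∞) := rfl
  rw [heq, integral_withDensity_eq_integral_smul ((φ_meas μ₀ S).real_toNNReal) h]
  congr 1; funext x
  rw [NNReal.smul_def, Real.coe_toNNReal _ (φ_nonneg μ₀ hS x), smul_eq_mul]

lemma integrable_wd_iff (μ₀ : Fin d → ℝ) {S : Matrix (Fin d) (Fin d) ℝ} (hS : S.PosDef)
    (h : (Fin d → ℝ) → ℝ) :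
    Integrable h (volume.withDensity fun x => ENNReal.ofReal (gaussianDensity μ₀ S x))
      ↔ Integrable (fun x => gaussianDensity μ₀ S x * h x) volume := by
  have heq : (fun x => ENNReal.ofReal (gaussianDensity μ₀ S x))
      = fun x => ((Real.toNNReal (gaussianDensity μ₀ S x)) : ℝ≥0∞) := rfl
  rw [heq, integrable_withDensity_iff_integrable_smul ((φ_meas μ₀ S).real_toNNReal)]
  constructor <;> intro hh <;> refine hh.congr (Filter.Eventually.of_forall fun x => ?_) <;>
    simp only [NNReal.smul_def, Real.coe_toNNReal _ (φ_nonneg μ₀ hS x), smul_eq_mul]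

lemma ν_prob {S B : Matrix (Fin d) (Fin d) ℝ} (μ₀ : Fin d → ℝ) (hS : S.PosDef)
    (hBB : B * B = S⁻¹) (hBt : Bᵀ = B) (hBd : 0 < B.det) :
    IsProbabilityMeasure
      (volume.withDensity fun x => ENNReal.ofReal (gaussianDensity μ₀ S x)) := by
  constructor
  rw [withDensity_apply _ MeasurableSet.univ, setLIntegral_univ,
    ← MeasureTheory.ofReal_integral_eq_lintegral_ofReal (φ_int μ₀ hS hBB hBt hBd)
      (Filter.Eventually.of_forall (φ_nonneg μ₀ hS)), φ_val μ₀ hS hBB hBt hBd]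
  simp

lemma log_φ (μ₀ : Fin d → ℝ) {S : Matrix (Fin d) (Fin d) ℝ} (hS : S.PosDef)
    (x : Fin d → ℝ) :
    Real.log (gaussianDensity μ₀ S x)
      = Real.log (((2 * π) ^ d * S.det) ^ (-(1 : ℝ) / 2))
        - (1/2) * ((x - μ₀) ⬝ᵥ S⁻¹ *ᵥ (x - μ₀)) := by
  unfold gaussianDensity
  rw [Real.log_mul (ne_of_gt (gc_pos hS)) (Real.exp_ne_zero _), Real.log_exp]
  ring

lemma var_gauss {S B : Matrix (Fin d) (Fin d) ℝ} (μ₀ : Fin d → ℝ) (hS : S.PosDef)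
    (hBB : B * B = S⁻¹) (hBt : Bᵀ = B) (hBd : 0 < B.det) :
    variance (fun x => Real.log (gaussianDensity μ₀ S x))
      (volume.withDensity fun x => ENNReal.ofReal (gaussianDensity μ₀ S x)) = d / 2 := by
  set a := Real.log (((2 * π) ^ d * S.det) ^ (-(1 : ℝ) / 2)) with ha
  set q := fun x : Fin d → ℝ => (x - μ₀) ⬝ᵥ S⁻¹ *ᵥ (x - μ₀) with hq
  have hprob := ν_prob μ₀ hS hBB hBt hBd
  have hlog : ∀ x, Real.log (gaussianDensity μ₀ S x) = a - (1/2) * q x :=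
    fun x => log_φ μ₀ hS x
  have hmeas : Measurable (fun x => Real.log (gaussianDensity μ₀ S x)) :=
    Real.measurable_log.comp (φ_meas μ₀ S)
  -- integrability of φ * ℓ and φ * ℓ^2
  have hint1 : Integrable (fun x => gaussianDensity μ₀ S x *
      Real.log (gaussianDensity μ₀ S x)) volume := by
    have : Integrable (fun x => a * gaussianDensity μ₀ S x
        - (1/2) * (q x * gaussianDensity μ₀ S x)) volume :=
      ((φ_int μ₀ hS hBB hBt hBd).const_mul a).sub
        ((qφ_int μ₀ hS hBB hBt hBd).const_mul (1/2))
    refine this.congr (Filter.Eventually.of_forall fun x => ?_)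
    simp only [hlog]; ring
  have hint2 : Integrable (fun x => gaussianDensity μ₀ S x *
      (Real.log (gaussianDensity μ₀ S x))^2) volume := by
    have : Integrable (fun x => a^2 * gaussianDensity μ₀ S x
        - a * (q x * gaussianDensity μ₀ S x)
        + (1/4) * ((q x)^2 * gaussianDensity μ₀ S x)) volume :=
      (((φ_int μ₀ hS hBB hBt hBd).const_mul (a^2)).sub
        ((qφ_int μ₀ hS hBB hBt hBd).const_mul a)).add
        ((q2φ_int μ₀ hS hBB hBt hBd).const_mul (1/4))
    refine this.congr (Filter.Eventually.of_forall fun x => ?_)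
    simp only [hlog]; ring
  have hmem : MemLp (fun x => Real.log (gaussianDensity μ₀ S x)) 2
      (volume.withDensity fun x => ENNReal.ofReal (gaussianDensity μ₀ S x)) := by
    rw [memLp_two_iff_integrable_sq hmeas.aestronglyMeasurable]
    rw [show (fun x => Real.log (gaussianDensity μ₀ S x) ^ 2)
      = fun x => Real.log (gaussianDensity μ₀ S x) ^ 2 from rfl]
    rw [integrable_wd_iff μ₀ hS]
    exact hint2
  rw [variance_eq_sub hmem]
  have e1 : ∫ x, Real.log (gaussianDensity μ₀ S x)
      ∂(volume.withDensity fun x => ENNReal.ofReal (gaussianDensity μ₀ S x))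
      = a - d/2 := by
    rw [integral_wd μ₀ hS]
    have : ∫ x, gaussianDensity μ₀ S x * Real.log (gaussianDensity μ₀ S x)
        = ∫ x, (a * gaussianDensity μ₀ S x - (1/2) * (q x * gaussianDensity μ₀ S x)) := by
      congr 1; funext x; rw [hlog x]; ring
    rw [this, integral_sub (((φ_int μ₀ hS hBB hBt hBd).const_mul a))
      ((qφ_int μ₀ hS hBB hBt hBd).const_mul (1/2)), integral_const_mul, integral_const_mul,
      φ_val μ₀ hS hBB hBt hBd, qφ_val μ₀ hS hBB hBt hBd]
    ring
  have e2 : ∫ x, ((fun x => Real.log (gaussianDensity μ₀ S x)) ^ 2) x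
      ∂(volume.withDensity fun x => ENNReal.ofReal (gaussianDensity μ₀ S x))
      = a^2 - a * d + (d^2 + 2*d)/4 := by
    simp only [Pi.pow_apply]
    rw [integral_wd μ₀ hS]
    have : ∫ x, gaussianDensity μ₀ S x * Real.log (gaussianDensity μ₀ S x) ^ 2
        = ∫ x, (a^2 * gaussianDensity μ₀ S x - a * (q x * gaussianDensity μ₀ S x)
            + (1/4) * ((q x)^2 * gaussianDensity μ₀ S x)) := by
      congr 1; funext x; rw [hlog x]; ring
    have hf : Integrable (fun x => a^2 * gaussianDensity μ₀ S x
        - a * (q x * gaussianDensity μ₀ S x)) volume :=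
      ((φ_int μ₀ hS hBB hBt hBd).const_mul (a^2)).sub
        ((qφ_int μ₀ hS hBB hBt hBd).const_mul a)
    have hg : Integrable (fun x => (1/4 : ℝ) * ((q x)^2 * gaussianDensity μ₀ S x)) volume :=
      (q2φ_int μ₀ hS hBB hBt hBd).const_mul (1/4)
    have hadd := integral_add hf hg
    rw [this, hadd,
      integral_sub (((φ_int μ₀ hS hBB hBt hBd).const_mul (a^2)))
        ((qφ_int μ₀ hS hBB hBt hBd).const_mul a),
      integral_const_mul, integral_const_mul, integral_const_mul,
      φ_val μ₀ hS hBB hBt hBd, qφ_val μ₀ hS hBB hBt hBd, q2φ_val μ₀ hS hBB hBt hBd]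
    ring
  rw [e1, e2]
  ring
end var

lemma gibbs {X : Type*} [MeasurableSpace X] {μ : Measure X} {φ ψ : X → ℝ}
    (hφpos : ∀ x, 0 < φ x) (hψpos : ∀ x, 0 < ψ x)
    (hφ : Integrable φ μ) (hψ : Integrable ψ μ)
    (hKL : Integrable (fun x => Real.log (φ x / ψ x) * φ x) μ)
    (heq : ∫ x, ψ x ∂μ = ∫ x, φ x ∂μ) :
    0 ≤ ∫ x, Real.log (φ x / ψ x) * φ x ∂μ := by
  have hpt : ∀ x, φ x - ψ x ≤ Real.log (φ x / ψ x) * φ x := by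
    intro x
    have h1 := Real.log_le_sub_one_of_pos (div_pos (hψpos x) (hφpos x))
    have h2 : (ψ x / φ x - 1) * φ x = ψ x - φ x := by
      rw [sub_mul, div_mul_cancel₀ _ (ne_of_gt (hφpos x)), one_mul]
    have h3 := mul_le_mul_of_nonneg_right h1 (le_of_lt (hφpos x))
    rw [h2] at h3
    have h4 : Real.log (ψ x / φ x) = - Real.log (φ x / ψ x) := by
      rw [← Real.log_inv]
      congr 1
      rw [inv_div]
    rw [h4] at h3
    nlinarith
  have hmono := integral_mono (hφ.sub hψ) hKL hpt
  simp only [Pi.sub_apply] at hmono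
  rw [integral_sub hφ hψ, heq] at hmono
  linarith

section mainthm
variable {d : ℕ}

lemma Qdet {Q : Matrix (Fin d) (Fin d) ℝ} (hQ : Qᵀ * Q = 1) :
    Q.det ≠ 0 ∧ |Q.det| = 1 := by
  have h1 : Q.det * Q.det = 1 := by
    have := congrArg Matrix.det hQ
    rwa [Matrix.det_mul, Matrix.det_transpose, Matrix.det_one] at this
  constructor
  · intro h; rw [h, mul_zero] at h1; norm_num at h1
  · rcases mul_self_eq_one_iff.mp h1 with h | h <;> rw [h] <;> norm_num

/-- Theorem 1 (detectability loss): for a Gaussian pre-change distribution and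
a rigid-motion change, the SNR of the change is at most `2·sKL²/d`. -/
theorem gaussian_detectability_loss {d : ℕ} (hd : 0 < d)
    (μ₀ : Fin d → ℝ) (S : Matrix (Fin d) (Fin d) ℝ) (hS : S.PosDef)
    (Q : Matrix (Fin d) (Fin d) ℝ) (hQ : Qᵀ * Q = 1) (v : Fin d → ℝ)
    (φ₀ φ₁ : (Fin d → ℝ) → ℝ)
    (hφ₀ : ∀ x, φ₀ x = gaussianDensity μ₀ S x)
    (hφ₁ : ∀ x, φ₁ x = φ₀ (Q *ᵥ x + v))
    (hI₀ : Integrable (fun x => Real.log (φ₀ x) * φ₀ x) volume)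
    (hI₁ : Integrable (fun x => Real.log (φ₀ x) * φ₁ x) volume)
    (hKL₀₁ : Integrable (fun x => Real.log (φ₀ x / φ₁ x) * φ₀ x) volume)
    (hKL₁₀ : Integrable (fun x => Real.log (φ₁ x / φ₀ x) * φ₁ x) volume) :
    ((∫ x, Real.log (φ₀ x) * φ₀ x) - ∫ x, Real.log (φ₀ x) * φ₁ x) ^ 2 /
        (variance (fun x => Real.log (φ₀ x))
            (volume.withDensity fun x => ENNReal.ofReal (φ₀ x)) +
         variance (fun x => Real.log (φ₀ x))
            (volume.withDensity fun x => ENNReal.ofReal (φ₁ x)))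
      ≤ 2 * ((∫ x, Real.log (φ₀ x / φ₁ x) * φ₀ x) +
              ∫ x, Real.log (φ₁ x / φ₀ x) * φ₁ x) ^ 2 / d := by
  obtain ⟨B, hBB, hBt, hBd⟩ := exists_sqrt hS
  obtain ⟨hQdet, hQabs⟩ := Qdet hQ
  have heq0 : φ₀ = gaussianDensity μ₀ S := funext hφ₀
  subst heq0
  have heq1 : φ₁ = fun x => gaussianDensity μ₀ S (Q *ᵥ x + v) := funext hφ₁
  subst heq1
  set φ := gaussianDensity μ₀ S with hφdef
  set φQ := fun x => φ (Q *ᵥ x + v) with hφQdef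
  -- positivity
  have hpos : ∀ x, 0 < φ x := φ_pos μ₀ hS
  have hQpos : ∀ x, 0 < φQ x := fun x => hpos _
  -- integrability of the densities
  have hφint : Integrable φ volume := φ_int μ₀ hS hBB hBt hBd
  have hφQint : Integrable φQ volume :=
    (integrable_affine_iff Q hQdet v φ).mpr hφint
  -- equal total mass
  have hmass : ∫ x, φQ x = ∫ x, φ x := by
    rw [hφQdef]
    rw [integral_affine Q hQdet v φ, hQabs]
    norm_num
  -- E11 = E00
  have hE11 : ∫ x, Real.log (φQ x) * φQ x = ∫ x, Real.log (φ x) * φ x := by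
    have h := integral_affine Q hQdet v (fun z => Real.log (φ z) * φ z)
    rw [hQabs] at h
    simp only [inv_one, one_mul] at h
    exact h
  have hI11 : Integrable (fun x => Real.log (φQ x) * φQ x) volume :=
    (integrable_affine_iff Q hQdet v (fun z => Real.log (φ z) * φ z)).mpr hI₀
  -- KL10 = E00 - E01
  have hKL10eq : ∫ x, Real.log (φQ x / φ x) * φQ x
      = (∫ x, Real.log (φ x) * φ x) - ∫ x, Real.log (φ x) * φQ x := by
    have hsplit : (fun x => Real.log (φQ x / φ x) * φQ x)
        = fun x => Real.log (φQ x) * φQ x - Real.log (φ x) * φQ x := by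
      funext x
      rw [Real.log_div (ne_of_gt (hQpos x)) (ne_of_gt (hpos x))]
      ring
    rw [hsplit, integral_sub hI11 hI₁, hE11]
  -- Gibbs inequalities
  have hKL01nn : 0 ≤ ∫ x, Real.log (φ x / φQ x) * φ x :=
    gibbs hpos hQpos hφint hφQint hKL₀₁ hmass
  have hKL10nn : 0 ≤ ∫ x, Real.log (φQ x / φ x) * φQ x :=
    gibbs hQpos hpos hφQint hφint hKL₁₀ hmass.symm
  -- variances
  have hV0 : variance (fun x => Real.log (φ x))
      (volume.withDensity fun x => ENNReal.ofReal (φ x)) = d / 2 :=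
    var_gauss μ₀ hS hBB hBt hBd
  have hV1 : 0 ≤ variance (fun x => Real.log (φ x))
      (volume.withDensity fun x => ENNReal.ofReal (φQ x)) :=
    variance_nonneg _ _
  -- final arithmetic
  set KL01 := ∫ x, Real.log (φ x / φQ x) * φ x
  set KL10 := ∫ x, Real.log (φQ x / φ x) * φQ x
  set V1 := variance (fun x => Real.log (φ x))
      (volume.withDensity fun x => ENNReal.ofReal (φQ x))
  rw [hV0, ← hKL10eq]
  have hdpos : (0:ℝ) < d := by exact_mod_cast hd
  have hstep : KL10 ^ 2 / ((d:ℝ)/2 + V1) ≤ (KL01 + KL10) ^ 2 / ((d:ℝ)/2) := by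
    apply div_le_div₀ (by positivity) ?_ (by positivity) (by linarith)
    have : KL10 ≤ KL01 + KL10 := by linarith
    exact pow_le_pow_left₀ hKL10nn this 2
  calc KL10 ^ 2 / ((d:ℝ)/2 + V1) ≤ (KL01 + KL10) ^ 2 / ((d:ℝ)/2) := hstep
    _ = 2 * (KL01 + KL10) ^ 2 / d := by
        field_simp
end mainthm
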